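/- Let H be a self-adjoint operator on a Hilbert space and A a C*-algebra of bounded operators on that space. If there exist norm-dense subsets A₊, A₋ of A with (H+i)^{-1}A₊ ⊆ A dense and (H-i)^{-1}A₋ ⊆ A dense, then for every f ∈ C₀(ℝ) the operator f(H) is a multiplier of A, i.e. f(H)a ∈ A and a f(H) ∈ A for all a ∈ A. -/

import Mathlib

open scoped ZeroAtInfty
open OnePoint

open Filter Topology in
/-- Extension of a `C₀` function to the one-point compactification, vanishing at `∞`. -/
noncomputable def zextend (f : C₀(ℝ, ℂ)) : C(OnePoint ℝ, ℂ) :=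
  OnePoint.continuousMapMk f.toContinuousMap 0
    (by rw [Filter.coclosedCompact_eq_cocompact]; exact f.zero_at_infty')

@[simp] lemma zextend_coe (f : C₀(ℝ, ℂ)) (x : ℝ) : zextend f (x : OnePoint ℝ) = f x := rfl
@[simp] lemma zextend_infty (f : C₀(ℝ, ℂ)) : zextend f (∞ : OnePoint ℝ) = 0 := rfl

lemma aux_dense (rp : C₀(ℝ, ℂ)) (hrp : ∀ x : ℝ, rp x = ((x : ℂ) + Complex.I)⁻¹)
    (f : C₀(ℝ, ℂ)) :
    f ∈ closure (NonUnitalStarAlgebra.adjoin ℂ {rp} : Set C₀(ℝ, ℂ)) := by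
  have hne : ∀ x : ℝ, ((x : ℂ) + Complex.I) ≠ 0 := by
    intro x h
    have := congrArg Complex.im h
    simp at this
  set Rp : C(OnePoint ℝ, ℂ) := zextend rp with hRp
  set B : StarSubalgebra ℂ C(OnePoint ℝ, ℂ) := StarAlgebra.adjoin ℂ {Rp} with hB
  have hsep : B.SeparatesPoints := by
    intro x y hxy
    refine ⟨(Rp : OnePoint ℝ → ℂ), ⟨Rp, ?_, rfl⟩, ?_⟩
    · exact StarAlgebra.subset_adjoin ℂ _ (Set.mem_singleton _)
    · cases x with
      | infty =>
        cases y with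
        | infty => exact absurd rfl hxy
        | coe y =>
          simp only [hRp]
          show (0 : ℂ) ≠ rp y
          rw [hrp]
          exact fun h => hne y (by simpa using (inv_eq_zero.mp h.symm))
      | coe x =>
        cases y with
        | infty =>
          show rp x ≠ (0 : ℂ)
          rw [hrp]
          exact fun h => hne x (inv_eq_zero.mp h)
        | coe y =>
          show rp x ≠ rp y
          rw [hrp, hrp]
          intro h
          apply hxy
          have := inv_injective h
          have hx : (x : ℂ) = y := by linear_combination this
          norm_cast at hx
          rw [hx]
  have hSW := ContinuousMap.starSubalgebra_topologicalClosure_eq_top_of_separatesPoints B hsep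
  -- every element of the nonunital adjoin vanishes at ∞ and restricts into the adjoin of rp
  have hres : ∀ p ∈ NonUnitalStarAlgebra.adjoin ℂ {Rp}, p ∞ = 0 ∧
      ∃ q ∈ NonUnitalStarAlgebra.adjoin ℂ {rp}, ∀ x : ℝ, q x = p (x : OnePoint ℝ) := by
    intro p hp
    induction hp using NonUnitalStarAlgebra.adjoin_induction with
    | mem x hx =>
      obtain rfl := Set.mem_singleton_iff.mp hx
      exact ⟨rfl, rp, NonUnitalStarAlgebra.self_mem_adjoin_singleton ℂ rp, fun x => rfl⟩
    | add x y hx hy ihx ihy =>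
      obtain ⟨hx0, qx, hqx, hqx'⟩ := ihx
      obtain ⟨hy0, qy, hqy, hqy'⟩ := ihy
      exact ⟨by simp [hx0, hy0], qx + qy, add_mem hqx hqy, fun t => by simp [hqx', hqy']⟩
    | zero => exact ⟨rfl, 0, zero_mem _, fun t => rfl⟩
    | mul x y hx hy ihx ihy =>
      obtain ⟨hx0, qx, hqx, hqx'⟩ := ihx
      obtain ⟨hy0, qy, hqy, hqy'⟩ := ihy
      exact ⟨by simp [hx0, hy0], qx * qy, mul_mem hqx hqy, fun t => by simp [hqx', hqy']⟩
    | smul r x hx ihx =>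
      obtain ⟨hx0, qx, hqx, hqx'⟩ := ihx
      exact ⟨by simp [hx0], r • qx, SMulMemClass.smul_mem r hqx, fun t => by simp [hqx']⟩
    | star x hx ihx =>
      obtain ⟨hx0, qx, hqx, hqx'⟩ := ihx
      exact ⟨by simp [hx0], star qx, star_mem hqx, fun t => by simp [hqx']⟩
  rw [Metric.mem_closure_iff]
  intro ε hε
  set F : C(OnePoint ℝ, ℂ) := zextend f with hF
  have hFc : F ∈ closure (B : Set C(OnePoint ℝ, ℂ)) := by
    have : F ∈ B.topologicalClosure := by rw [hSW]; trivial
    exact this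
  obtain ⟨P, hPB, hPF⟩ := Metric.mem_closure_iff.mp hFc (ε / 2) (by positivity)
  -- decompose P = c • 1 + n
  have hmem : P ∈ Submodule.span ℂ {(1 : C(OnePoint ℝ, ℂ))} ⊔
      (NonUnitalStarAlgebra.adjoin ℂ {Rp}).toSubmodule := by
    rw [← StarAlgebra.adjoin_nonUnitalStarSubalgebra_eq_span,
      Subalgebra.mem_toSubmodule, StarSubalgebra.mem_toSubalgebra,
      StarAlgebra.adjoin_nonUnitalStarSubalgebra]
    exact hPB
  obtain ⟨u, hu, n, hn, rfl⟩ := Submodule.mem_sup.mp hmem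
  obtain ⟨c, rfl⟩ := Submodule.mem_span_singleton.mp hu
  obtain ⟨hn0, q, hq, hq'⟩ := hres n hn
  -- bound |c|
  have hceval : (c • (1 : C(OnePoint ℝ, ℂ)) + n) ∞ = c := by simp [hn0]
  have hcb : ‖c‖ < ε / 2 := by
    calc ‖c‖ = ‖F ∞ - (c • (1 : C(OnePoint ℝ, ℂ)) + n) ∞‖ := by
          simp [hceval, hF]
      _ = ‖(F - (c • (1 : C(OnePoint ℝ, ℂ)) + n)) ∞‖ := by simp
      _ ≤ ‖F - (c • (1 : C(OnePoint ℝ, ℂ)) + n)‖ := ContinuousMap.norm_coe_le_norm _ _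
      _ = dist F (c • (1 : C(OnePoint ℝ, ℂ)) + n) := (dist_eq_norm _ _).symm
      _ < ε / 2 := hPF
  have hFn : ‖F - n‖ < ε := by
    have h1 : F - n = (F - (c • (1 : C(OnePoint ℝ, ℂ)) + n)) + c • 1 := by abel
    calc ‖F - n‖ ≤ ‖F - (c • (1 : C(OnePoint ℝ, ℂ)) + n)‖ + ‖c • (1 : C(OnePoint ℝ, ℂ))‖ := by
          rw [h1]; exact norm_add_le _ _
      _ < ε / 2 + ε / 2 := by
          apply add_lt_add
          · rw [← dist_eq_norm]; exact hPF
          · rw [norm_smul, norm_one, mul_one]; exact hcb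
      _ = ε := by ring
  refine ⟨q, hq, ?_⟩
  rw [dist_eq_norm, ← ZeroAtInftyContinuousMap.norm_toBCF_eq_norm]
  calc ‖(f - q).toBCF‖ ≤ ‖F - n‖ := by
        apply BoundedContinuousFunction.norm_le (norm_nonneg _) |>.mpr
        intro x
        have : f x - q x = (F - n) (x : OnePoint ℝ) := by simp [hq' x, hF]
        show ‖f x - q x‖ ≤ _
        rw [this]
        exact ContinuousMap.norm_coe_le_norm _ _
    _ < ε := hFn

/-- Let `H` be a self-adjoint operator on a Hilbert space, encoded through its
continuous functional calculus `φ : C₀(ℝ) → B(E)` (a continuous non-unital *-homomorphism sending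
`f ↦ f(H)`), and let `A ⊆ B(E)` be a C*-algebra (a closed non-unital star subalgebra).  Denote by
`rp, rm ∈ C₀(ℝ)` the resolvent functions `x ↦ (x ± i)⁻¹`, so that `φ rp = (H+i)⁻¹` and
`φ rm = (H-i)⁻¹`.  If there are norm-dense subsets `Ap, Am` of `A` with `(H+i)⁻¹·Ap ⊆ A` dense
and `(H-i)⁻¹·Am ⊆ A` dense, then for every `f ∈ C₀(ℝ)` the operator `f(H)` is a multiplier of
`A`, i.e. `f(H)·a ∈ A` and `a·f(H) ∈ A` for all `a ∈ A`. -/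
theorem stmt1 {E : Type*} [NormedAddCommGroup E] [InnerProductSpace ℂ E] [CompleteSpace E]
    (A : NonUnitalStarSubalgebra ℂ (E →L[ℂ] E))
    (hAclosed : IsClosed (A : Set (E →L[ℂ] E)))
    (φ : C₀(ℝ, ℂ) →⋆ₙₐ[ℂ] (E →L[ℂ] E)) (hφ : Continuous φ)
    (rp rm : C₀(ℝ, ℂ))
    (hrp : ∀ x : ℝ, rp x = ((x : ℂ) + Complex.I)⁻¹)
    (hrm : ∀ x : ℝ, rm x = ((x : ℂ) - Complex.I)⁻¹)
    (Ap Am : Set (E →L[ℂ] E))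
    (hApsub : Ap ⊆ (A : Set (E →L[ℂ] E))) (hAmsub : Am ⊆ (A : Set (E →L[ℂ] E)))
    (hApdense : (A : Set (E →L[ℂ] E)) ⊆ closure Ap)
    (hAmdense : (A : Set (E →L[ℂ] E)) ⊆ closure Am)
    (hpmem : ∀ a ∈ Ap, φ rp * a ∈ A)
    (hmmem : ∀ a ∈ Am, φ rm * a ∈ A)
    (hpdense : (A : Set (E →L[ℂ] E)) ⊆ closure ((fun a => φ rp * a) '' Ap))
    (hmdense : (A : Set (E →L[ℂ] E)) ⊆ closure ((fun a => φ rm * a) '' Am)) :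
    ∀ f : C₀(ℝ, ℂ), ∀ a ∈ A, φ f * a ∈ A ∧ a * φ f ∈ A := by
  have hstar : star rp = rm := by
    ext x
    show star (rp x) = rm x
    rw [hrp, hrm, star_inv₀]
    congr 1
    simp [Complex.ext_iff]
  have key1 : ∀ a ∈ A, φ rp * a ∈ A := by
    intro a ha
    have : φ rp * a ∈ closure (A : Set (E →L[ℂ] E)) :=
      map_mem_closure (f := fun x => φ rp * x) (continuous_const.mul continuous_id) (hApdense ha)
        (fun x hx => hpmem x hx)
    rwa [hAclosed.closure_eq] at this
  have key2 : ∀ a ∈ A, φ rm * a ∈ A := by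
    intro a ha
    have : φ rm * a ∈ closure (A : Set (E →L[ℂ] E)) :=
      map_mem_closure (f := fun x => φ rm * x) (continuous_const.mul continuous_id) (hAmdense ha)
        (fun x hx => hmmem x hx)
    rwa [hAclosed.closure_eq] at this
  set S : Set C₀(ℝ, ℂ) := {f | ∀ a ∈ A, φ f * a ∈ A ∧ a * φ f ∈ A} with hSdef
  have hSclosed : IsClosed S := by
    refine isClosed_of_closure_subset ?_
    intro f hf a ha
    constructor
    · have : φ f * a ∈ closure (A : Set (E →L[ℂ] E)) :=
        map_mem_closure (f := fun g => φ g * a) (hφ.mul continuous_const) hf (fun g hg => (hg a ha).1)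
      rwa [hAclosed.closure_eq] at this
    · have : a * φ f ∈ closure (A : Set (E →L[ℂ] E)) :=
        map_mem_closure (f := fun g => a * φ g) (continuous_const.mul hφ) hf (fun g hg => (hg a ha).2)
      rwa [hAclosed.closure_eq] at this
  have hrpS : rp ∈ S := by
    intro a ha
    refine ⟨key1 a ha, ?_⟩
    have h2 := star_mem (key2 _ (star_mem ha) : φ rm * star a ∈ A)
    rw [star_mul, star_star, ← map_star, show star rm = rp from by
      rw [← hstar, star_star]] at h2
    exact h2
  have hrmS : rm ∈ S := by
    intro a ha
    refine ⟨key2 a ha, ?_⟩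
    have h2 := star_mem (key1 _ (star_mem ha) : φ rp * star a ∈ A)
    rw [star_mul, star_star, ← map_star, hstar] at h2
    exact h2
  have hadj : (NonUnitalStarAlgebra.adjoin ℂ {rp} : Set C₀(ℝ, ℂ)) ⊆ S := by
    intro g hg
    induction hg using NonUnitalStarAlgebra.adjoin_induction with
    | mem x hx =>
      obtain rfl := Set.mem_singleton_iff.mp hx
      exact hrpS
    | add x y hx hy ihx ihy =>
      intro a ha
      refine ⟨?_, ?_⟩
      · rw [map_add, add_mul]; exact add_mem (ihx a ha).1 (ihy a ha).1
      · rw [map_add, mul_add]; exact add_mem (ihx a ha).2 (ihy a ha).2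
    | zero =>
      intro a ha
      rw [map_zero, zero_mul, mul_zero]
      exact ⟨zero_mem _, zero_mem _⟩
    | mul x y hx hy ihx ihy =>
      intro a ha
      refine ⟨?_, ?_⟩
      · rw [map_mul, mul_assoc]; exact (ihx _ (ihy a ha).1).1
      · rw [map_mul, ← mul_assoc]; exact (ihy _ (ihx a ha).2).2
    | smul r x hx ihx =>
      intro a ha
      refine ⟨?_, ?_⟩
      · rw [_root_.map_smul, smul_mul_assoc]; exact SMulMemClass.smul_mem r (ihx a ha).1
      · rw [_root_.map_smul, mul_smul_comm]; exact SMulMemClass.smul_mem r (ihx a ha).2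
    | star x hx ihx =>
      intro a ha
      constructor
      · have := star_mem (ihx (star a) (star_mem ha)).2
        rwa [star_mul, star_star, ← map_star] at this
      · have := star_mem (ihx (star a) (star_mem ha)).1
        rwa [star_mul, star_star, ← map_star] at this
  intro f
  exact closure_minimal hadj hSclosed (aux_dense rp hrp f)
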